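/- Let F be a field, q, t ∈ F nonzero elements satisfying the (k,r)-resonance condition, and n ≥ k+1. Let f ∈ F[x_1,…,x_n] be a symmetric polynomial satisfying the (k,r)-wheel condition, and let I ⊆ {1,…,n} be any subset. Define the polynomial g = (∏_{i∈I, j∉I} (t x_i − x_j)) · f(x̃_1,…,x̃_n), where x̃_i = q x_i if i ∈ I and x̃_i = x_i otherwise. Then for every tuple (s_1,…,s_{k+1}) of nonnegative integers with s_1 + … + s_{k+1} = r−1, the polynomial g becomes identically zero after the substitution x_i = t^{i−1} q^{s_1+…+s_{i−1}} x_1 for i = 2,…,k+1 (as a polynomial in the remaining variables x_1, x_{k+2},…,x_n). -/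

import Mathlib

set_option maxHeartbeats 1000000
open MvPolynomial

/-- The wheel substitution `x_1 ↦ x_1`, `x_i ↦ t^{i-1} q^{s_1+⋯+s_{i-1}} x_1`
for `2 ≤ i ≤ k+1` (0-based: `x_i ↦ t^i q^{s_0+⋯+s_{i-1}} x_0` for `i ≤ k`),
leaving the remaining variables fixed. -/
noncomputable def wheelSubst {F : Type*} [CommRing F] (k n : ℕ) (q t : F)
    (hn : k + 1 ≤ n) (s : Fin (k + 1) → ℕ) :
    MvPolynomial (Fin n) F →ₐ[F] MvPolynomial (Fin n) F :=
  MvPolynomial.aeval fun i : Fin n =>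
    if (i : ℕ) ≤ k then
      (t ^ (i : ℕ) *
          q ^ (∑ j ∈ Finset.univ.filter (fun j : Fin (k + 1) => (j : ℕ) < (i : ℕ)), s j)) •
        MvPolynomial.X (⟨0, by omega⟩ : Fin n)
    else MvPolynomial.X i

/-- `f` satisfies the (k,r)-wheel condition: for every tuple
`(s_1,…,s_{k+1})` of nonnegative integers summing to `r−1`, `f` vanishes under
the wheel substitution.  (For `n ≤ k` the condition is vacuous.) -/
def WheelCondition {F : Type*} [CommRing F] (k r n : ℕ) (q t : F)
    (f : MvPolynomial (Fin n) F) : Prop :=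
  ∀ (hn : k + 1 ≤ n) (s : Fin (k + 1) → ℕ), (∑ j, s j) = r - 1 →
    wheelSubst k n q t hn s f = 0

/-- partial sum of `s` over indices `< m`. -/
def Ssum {k : ℕ} (s : Fin (k+1) → ℕ) (m : ℕ) : ℕ :=
  ∑ j ∈ Finset.univ.filter (fun j : Fin (k+1) => (j : ℕ) < m), s j

lemma Ssum_zero {k : ℕ} (s : Fin (k+1) → ℕ) : Ssum s 0 = 0 := by
  simp [Ssum]

lemma Ssum_succ {k : ℕ} (s : Fin (k+1) → ℕ) (m : ℕ) (hm : m ≤ k) :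
    Ssum s (m+1) = Ssum s m + s ⟨m, by omega⟩ := by
  have hins : Finset.univ.filter (fun j : Fin (k+1) => (j : ℕ) < m+1)
      = insert (⟨m, by omega⟩ : Fin (k+1)) (Finset.univ.filter (fun j : Fin (k+1) => (j : ℕ) < m)) := by
    ext j
    simp [Fin.ext_iff]
    omega
  rw [Ssum, hins, Finset.sum_insert (by simp)]
  rw [Ssum]
  ring

lemma Ssum_top {k : ℕ} (s : Fin (k+1) → ℕ) : Ssum s (k+1) = ∑ j, s j := by
  have : Finset.univ.filter (fun j : Fin (k+1) => (j : ℕ) < k+1) = Finset.univ := by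
    ext j; simp [j.isLt]; exact Nat.lt_succ_iff.mp j.isLt
  rw [Ssum, this]

/-- indicator (as `ℕ`) of the set `I`, on natural indices. -/
def epsI {n : ℕ} (I : Finset (Fin n)) (m : ℕ) : ℕ :=
  if h : m < n then (if (⟨m, h⟩ : Fin n) ∈ I then 1 else 0) else 0

/-- the modified wheel tuple used in the "good" case. -/
def sPrime (k r : ℕ) {n : ℕ} (I : Finset (Fin n)) (s : Fin (k+1) → ℕ) : Fin (k+1) → ℕ :=
  fun i => if (i : ℕ) < k then
      Ssum s ((i:ℕ)+1) + epsI I ((i:ℕ)+1) - (Ssum s (i:ℕ) + epsI I (i:ℕ))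
    else (r - 1) + epsI I 0 - (Ssum s k + epsI I k)

/-- the outer substitution used in the "good" case. -/
noncomputable def uVec {F : Type*} [CommRing F] {n : ℕ} (k : ℕ) (q : F) (I : Finset (Fin n)) :
    Fin n → MvPolynomial (Fin n) F :=
  fun j => if 0 < (j:ℕ) ∧ (j:ℕ) ≤ k then X j else (if j ∈ I then C q * X j else X j)

lemma wheelSubst_X {F : Type*} [CommRing F] (k n : ℕ) (q t : F)
    (hn : k + 1 ≤ n) (s : Fin (k + 1) → ℕ) (i : Fin n) :
    wheelSubst k n q t hn s (X i) =
      if (i : ℕ) ≤ k then C (t ^ (i:ℕ) * q ^ Ssum s (i:ℕ)) * X (⟨0, by omega⟩ : Fin n)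
      else X i := by
  simp only [wheelSubst, aeval_X, smul_eq_C_mul]
  rfl

lemma wheelSubst_C {F : Type*} [CommRing F] (k n : ℕ) (q t : F)
    (hn : k + 1 ≤ n) (s : Fin (k + 1) → ℕ) (a : F) :
    wheelSubst k n q t hn s (C a) = C a := by
  simp only [wheelSubst]
  rw [aeval_C, algebraMap_eq]

lemma comp_eq_aux {F : Type*} [CommRing F] {n : ℕ}
    (φ ψ : MvPolynomial (Fin n) F →ₐ[F] MvPolynomial (Fin n) F) (g : MvPolynomial (Fin n) F) :
    φ (ψ g) = aeval (fun i => φ (ψ (X i))) g := by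
  rw [← AlgHom.comp_apply, aeval_unique (φ.comp ψ)]
  rfl

theorem stmt3 (k r n : ℕ) (hk : 1 ≤ k) (hr : 2 ≤ r) (hn : k + 1 ≤ n)
    (F : Type*) [Field F] (q t : F) (hq0 : q ≠ 0) (ht0 : t ≠ 0)
    (hres : ∀ a b : ℤ, q ^ a * t ^ b = 1 ↔
      ∃ s : ℤ, a = ((r : ℤ) - 1) * s ∧ b = ((k : ℤ) + 1) * s)
    (f : MvPolynomial (Fin n) F) (hsym : f.IsSymmetric)
    (hwheel : WheelCondition k r n q t f)
    (I : Finset (Fin n)) :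
    WheelCondition k r n q t
      ((∏ i ∈ I, ∏ j ∈ Iᶜ, (MvPolynomial.C t * MvPolynomial.X i - MvPolynomial.X j)) *
        MvPolynomial.aeval
          (fun i : Fin n => if i ∈ I then MvPolynomial.C q * MvPolynomial.X i
            else MvPolynomial.X i) f) := by
  intro hn' s hs
  classical
  have hSk1 : Ssum s (k+1) = r - 1 := by rw [Ssum_top]; exact hs
  have hSks : Ssum s (k+1) = Ssum s k + s ⟨k, by omega⟩ := Ssum_succ s k le_rfl
  have heps : ∀ m, epsI I m ≤ 1 := by
    intro m; unfold epsI; split_ifs <;> omega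
  have hεm : ∀ (m : ℕ) (hm : m < n), epsI I m = if (⟨m, hm⟩ : Fin n) ∈ I then 1 else 0 := by
    intro m hm; unfold epsI; rw [dif_pos hm]
  by_cases hbad :
      (∃ i, i < k ∧ epsI I i = 1 ∧ epsI I (i+1) = 0 ∧ Ssum s (i+1) = Ssum s i) ∨
      (epsI I k = 1 ∧ epsI I 0 = 0 ∧ Ssum s k = r - 1)
  · -- bad case: a factor of the product vanishes
    rw [map_mul]
    refine mul_eq_zero_of_left ?_ _
    rw [map_prod]
    rcases hbad with ⟨i, hik, h1, h2, h3⟩ | ⟨h1, h2, h3⟩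
    · have hin : i < n := by omega
      have hi1n : i + 1 < n := by omega
      have hiI : (⟨i, hin⟩ : Fin n) ∈ I := by
        rw [hεm i hin] at h1
        by_contra hc; rw [if_neg hc] at h1; exact absurd h1 (by omega)
      have hjI : (⟨i+1, hi1n⟩ : Fin n) ∈ Iᶜ := by
        rw [Finset.mem_compl]
        intro hc; rw [hεm (i+1) hi1n, if_pos hc] at h2; exact one_ne_zero h2
      refine Finset.prod_eq_zero hiI ?_
      rw [map_prod]
      refine Finset.prod_eq_zero hjI ?_
      rw [map_sub, map_mul, wheelSubst_C, wheelSubst_X, wheelSubst_X]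
      rw [if_pos (show ((⟨i, hin⟩ : Fin n) : ℕ) ≤ k by simpa using le_of_lt hik)]
      rw [if_pos (show ((⟨i+1, hi1n⟩ : Fin n) : ℕ) ≤ k by simpa using hik)]
      show C t * (C (t ^ i * q ^ Ssum s i) * X _) - C (t ^ (i+1) * q ^ Ssum s (i+1)) * X _ = 0
      rw [h3, ← mul_assoc, ← C_mul,
        show t * (t ^ i * q ^ Ssum s i) = t ^ (i+1) * q ^ Ssum s i by ring, sub_self]
    · -- cyclic factor, using resonance
      have hkn : k < n := by omega
      have h0n : (0:ℕ) < n := by omega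
      have hiI : (⟨k, hkn⟩ : Fin n) ∈ I := by
        rw [hεm k hkn] at h1
        by_contra hc; rw [if_neg hc] at h1; exact absurd h1 (by omega)
      have hjI : (⟨0, h0n⟩ : Fin n) ∈ Iᶜ := by
        rw [Finset.mem_compl]
        intro hc; rw [hεm 0 h0n, if_pos hc] at h2; exact one_ne_zero h2
      refine Finset.prod_eq_zero hiI ?_
      rw [map_prod]
      refine Finset.prod_eq_zero hjI ?_
      rw [map_sub, map_mul, wheelSubst_C, wheelSubst_X, wheelSubst_X]
      rw [if_pos (show ((⟨k, hkn⟩ : Fin n) : ℕ) ≤ k by simp)]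
      rw [if_pos (show ((⟨0, h0n⟩ : Fin n) : ℕ) ≤ k by simp)]
      show C t * (C (t ^ k * q ^ Ssum s k) * X _) - C (t ^ 0 * q ^ Ssum s 0) * X _ = 0
      have hres1 : q ^ (r-1) * t ^ (k+1) = 1 := by
        have h := (hres ((r:ℤ)-1) ((k:ℤ)+1)).2 ⟨1, by ring, by ring⟩
        rw [show ((r:ℤ)-1) = ((r-1 : ℕ) : ℤ) by omega,
          show ((k:ℤ)+1) = ((k+1 : ℕ) : ℤ) by omega, zpow_natCast, zpow_natCast] at h
        exact h
      rw [h3, Ssum_zero, pow_zero, pow_zero, one_mul, C_1, one_mul, ← mul_assoc, ← C_mul,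
        show t * (t ^ k * q ^ (r-1)) = 1 by linear_combination hres1, C_1, one_mul, sub_self]
  · -- good case
    have hb1 : ∀ i, i < k →
        ¬(epsI I i = 1 ∧ epsI I (i+1) = 0 ∧ Ssum s (i+1) = Ssum s i) :=
      fun i hi h => hbad (Or.inl ⟨i, hi, h⟩)
    have hb2 : ¬(epsI I k = 1 ∧ epsI I 0 = 0 ∧ Ssum s k = r - 1) :=
      fun h => hbad (Or.inr h)
    have hmono : ∀ i, i < k → Ssum s i ≤ Ssum s (i+1) := by
      intro i hi; rw [Ssum_succ s i (by omega)]; omega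
    have step : ∀ i, i < k → Ssum s i + epsI I i ≤ Ssum s (i+1) + epsI I (i+1) := by
      intro i hi
      have h1 := heps i
      have h2 := heps (i+1)
      have h3 := hmono i hi
      by_cases hc : epsI I i = 1 ∧ epsI I (i+1) = 0
      · have hne : Ssum s (i+1) ≠ Ssum s i := fun h => hb1 i hi ⟨hc.1, hc.2, h⟩
        omega
      · rw [not_and_or] at hc
        omega
    have hSkle : Ssum s k ≤ r - 1 := by omega
    have stepk : Ssum s k + epsI I k ≤ (r-1) + epsI I 0 := by
      have h1 := heps k
      have h2 := heps 0
      by_cases hc : epsI I k = 1 ∧ epsI I 0 = 0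
      · have hne : Ssum s k ≠ r - 1 := fun h => hb2 ⟨hc.1, hc.2, h⟩
        omega
      · rw [not_and_or] at hc
        omega
    set s' : Fin (k+1) → ℕ := sPrime k r I s with hs'def
    have hsP : ∀ (m : ℕ) (hm : m < k), s' ⟨m, by omega⟩ =
        Ssum s (m+1) + epsI I (m+1) - (Ssum s m + epsI I m) := by
      intro m hm
      rw [hs'def]
      simp only [sPrime]
      rw [if_pos (show ((⟨m, by omega⟩ : Fin (k+1)) : ℕ) < k by simpa using hm)]
    have hsPk : s' ⟨k, by omega⟩ = (r-1) + epsI I 0 - (Ssum s k + epsI I k) := by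
      rw [hs'def]
      simp only [sPrime]
      rw [if_neg (show ¬ ((⟨k, by omega⟩ : Fin (k+1)) : ℕ) < k by simp)]
    have claim : ∀ m, m ≤ k → Ssum s' m + epsI I 0 = Ssum s m + epsI I m := by
      intro m
      induction m with
      | zero => intro _; rw [Ssum_zero, Ssum_zero]
      | succ m ih =>
        intro hm
        rw [Ssum_succ s' m (by omega)]
        have hih := ih (by omega)
        have hst := step m (by omega)
        have hx : s' ⟨m, by omega⟩ + (Ssum s m + epsI I m)
            = Ssum s (m+1) + epsI I (m+1) := by
          rw [hsP m (by omega)]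
          exact Nat.sub_add_cancel hst
        omega
    have hs' : (∑ j, s' j) = r - 1 := by
      rw [← Ssum_top, Ssum_succ s' k le_rfl]
      have hcl := claim k le_rfl
      have hx : s' ⟨k, by omega⟩ + (Ssum s k + epsI I k) = (r-1) + epsI I 0 := by
        rw [hsPk]
        exact Nat.sub_add_cancel stepk
      omega
    have hwheel' : wheelSubst k n q t hn' s' f = 0 := hwheel hn' s' hs'
    rw [map_mul]
    refine mul_eq_zero_of_right _ ?_
    rw [comp_eq_aux]
    have hptw : ∀ i : Fin n,
        wheelSubst k n q t hn' s
          ((aeval (fun i : Fin n => if i ∈ I then C q * X i else X i) :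
              MvPolynomial (Fin n) F →ₐ[F] MvPolynomial (Fin n) F) (X i))
        = aeval (uVec k q I) (wheelSubst k n q t hn' s' (X i)) := by
      intro i
      rw [aeval_X, wheelSubst_X]
      by_cases hik : (i : ℕ) ≤ k
      · rw [if_pos hik, map_mul, aeval_C, algebraMap_eq, aeval_X]
        have h0n : (0:ℕ) < n := by omega
        have hu0 : uVec k q I (⟨0, by omega⟩ : Fin n) =
            if (⟨0, h0n⟩ : Fin n) ∈ I then C q * X (⟨0, h0n⟩ : Fin n) else X (⟨0, h0n⟩ : Fin n) := by
          simp [uVec]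
        rw [hu0]
        have hcl := claim (i : ℕ) hik
        have hεi : epsI I (i : ℕ) = if i ∈ I then 1 else 0 := by
          rw [hεm (i:ℕ) i.isLt]
        have hε0 : epsI I 0 = if (⟨0, h0n⟩ : Fin n) ∈ I then 1 else 0 := hεm 0 h0n
        by_cases hiI : i ∈ I <;> by_cases h0I : (⟨0, h0n⟩ : Fin n) ∈ I
        · rw [if_pos hiI, if_pos h0I, map_mul, wheelSubst_C, wheelSubst_X, if_pos hik]
          have hSS : Ssum s' (i:ℕ) = Ssum s (i:ℕ) := by
            rw [hεi, if_pos hiI] at hcl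
            rw [hε0, if_pos h0I] at hcl
            omega
          rw [hSS]
          simp only [C_mul, C_pow, pow_succ]
          ring
        · rw [if_pos hiI, if_neg h0I, map_mul, wheelSubst_C, wheelSubst_X, if_pos hik]
          have hSS : Ssum s' (i:ℕ) = Ssum s (i:ℕ) + 1 := by
            rw [hεi, if_pos hiI] at hcl
            rw [hε0, if_neg h0I] at hcl
            omega
          rw [hSS]
          simp only [C_mul, C_pow, pow_succ]
          ring
        · rw [if_neg hiI, if_pos h0I, wheelSubst_X, if_pos hik]
          have hSS : Ssum s (i:ℕ) = Ssum s' (i:ℕ) + 1 := by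
            rw [hεi, if_neg hiI] at hcl
            rw [hε0, if_pos h0I] at hcl
            omega
          rw [hSS]
          simp only [C_mul, C_pow, pow_succ]
          ring
        · rw [if_neg hiI, if_neg h0I, wheelSubst_X, if_pos hik]
          have hSS : Ssum s' (i:ℕ) = Ssum s (i:ℕ) := by
            rw [hεi, if_neg hiI] at hcl
            rw [hε0, if_neg h0I] at hcl
            omega
          rw [hSS]
      · rw [if_neg hik, aeval_X]
        have hu : uVec k q I i = if i ∈ I then C q * X i else X i := by
          simp only [uVec]
          rw [if_neg (by omega)]
        rw [hu]
        by_cases hiI : i ∈ I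
        · rw [if_pos hiI, map_mul, wheelSubst_C, wheelSubst_X, if_neg hik]
        · rw [if_neg hiI, wheelSubst_X, if_neg hik]
    rw [funext hptw, ← comp_eq_aux, hwheel', map_zero]
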